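/- Let k ≥ 1 be a natural number, let χ be an integer with c := −2χ + 2 − k > 0, and let 0 ≤ b₁ ≤ b₂ ≤ … ≤ b_k be real numbers. Define f(x) = 6·c·Real.arcsin(1/(2·Real.cosh(x/2))) + 2·∑_{i=1}^{k−1} Real.arcsin(Real.cosh(b_i/2)/Real.cosh(x/2)). Then f is continuous on [b_k, ∞), strictly decreasing on [b_k, ∞), and f(x) tends to 0 as x → ∞. -/

import Mathlib

open Filter

/-- The function `f = f_{(b₁,…,b_{k−1})}` from Lemma F:
`f(x) = 6c·arcsin(1/(2cosh(x/2))) + 2∑_{i=1}^{k−1} arcsin(cosh(bᵢ/2)/cosh(x/2))`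
(with `c = −2χ + 2 − k > 0` and `0 ≤ b₁ ≤ ⋯ ≤ b_k`) is continuous on `[b_k, ∞)`,
strictly decreasing on `[b_k, ∞)`, and tends to `0` as `x → ∞`. -/
theorem stmt_2 (k : ℕ) (hk : 1 ≤ k) (χ : ℤ) (c : ℤ) (hc : c = -2 * χ + 2 - (k : ℤ))
    (hcpos : 0 < c) (b : ℕ → ℝ) (hb0 : 0 ≤ b 1)
    (hbmono : ∀ i j, 1 ≤ i → i ≤ j → j ≤ k → b i ≤ b j)
    (f : ℝ → ℝ)
    (hf : ∀ x, f x = 6 * (c : ℝ) * Real.arcsin (1 / (2 * Real.cosh (x / 2)))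
      + 2 * ∑ i ∈ Finset.Icc 1 (k - 1),
          Real.arcsin (Real.cosh (b i / 2) / Real.cosh (x / 2))) :
    ContinuousOn f (Set.Ici (b k)) ∧ StrictAntiOn f (Set.Ici (b k)) ∧
      Tendsto f atTop (nhds 0) := by
  have hfe : f = fun x => 6 * (c : ℝ) * Real.arcsin (1 / (2 * Real.cosh (x / 2)))
      + 2 * ∑ i ∈ Finset.Icc 1 (k - 1),
          Real.arcsin (Real.cosh (b i / 2) / Real.cosh (x / 2)) := funext hf
  have hcoshc : Continuous fun x : ℝ => Real.cosh (x / 2) :=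
    Real.continuous_cosh.comp (continuous_id.div_const 2)
  have hcont : Continuous f := by
    rw [hfe]
    refine Continuous.add ?_ ?_
    · exact continuous_const.mul (Real.continuous_arcsin.comp
        (continuous_const.div (continuous_const.mul hcoshc)
          (fun x => by positivity)))
    · exact continuous_const.mul (continuous_finset_sum _ fun i _ =>
        Real.continuous_arcsin.comp
          (continuous_const.div hcoshc fun x => (Real.cosh_pos _).ne'))
  have hbk0 : 0 ≤ b k := le_trans hb0 (hbmono 1 k le_rfl hk le_rfl)
  refine ⟨hcont.continuousOn, ?_, ?_⟩
  · intro x hx y hy hxy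
    have hx0 : 0 ≤ x := le_trans hbk0 hx
    have hcx : Real.cosh (x / 2) < Real.cosh (y / 2) := by
      rw [Real.cosh_lt_cosh, abs_of_nonneg (by linarith : (0:ℝ) ≤ x / 2),
        abs_of_nonneg (by linarith : (0:ℝ) ≤ y / 2)]
      linarith
    have h1x : (1:ℝ) ≤ Real.cosh (x / 2) := Real.one_le_cosh _
    have h1y : (1:ℝ) ≤ Real.cosh (y / 2) := Real.one_le_cosh _
    have h1 : Real.arcsin (1 / (2 * Real.cosh (y / 2)))
        < Real.arcsin (1 / (2 * Real.cosh (x / 2))) := by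
      apply Real.strictMonoOn_arcsin
      · refine ⟨?_, ?_⟩
        · have h : (0:ℝ) ≤ 1 / (2 * Real.cosh (y / 2)) := by positivity
          linarith
        · rw [div_le_one (by positivity)]; linarith
      · refine ⟨?_, ?_⟩
        · have h : (0:ℝ) ≤ 1 / (2 * Real.cosh (x / 2)) := by positivity
          linarith
        · rw [div_le_one (by positivity)]; linarith
      · apply one_div_lt_one_div_of_lt (by positivity)
        linarith
    have h2 : ∑ i ∈ Finset.Icc 1 (k - 1),
          Real.arcsin (Real.cosh (b i / 2) / Real.cosh (y / 2))
        ≤ ∑ i ∈ Finset.Icc 1 (k - 1),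
          Real.arcsin (Real.cosh (b i / 2) / Real.cosh (x / 2)) := by
      refine Finset.sum_le_sum fun i _ => Real.monotone_arcsin ?_
      have hnum : (0:ℝ) ≤ Real.cosh (b i / 2) := (Real.cosh_pos _).le
      have hpos : (0:ℝ) < Real.cosh (x / 2) := Real.cosh_pos _
      exact div_le_div_of_nonneg_left hnum hpos hcx.le
    have h6 : (0:ℝ) < 6 * (c : ℝ) := by positivity
    rw [hf x, hf y]
    have := mul_lt_mul_of_pos_left h1 h6
    linarith
  · have hdivtop : Tendsto (fun x : ℝ => x / 2) atTop atTop :=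
      tendsto_id.atTop_div_const two_pos
    have hexp : Tendsto (fun x : ℝ => Real.exp x / 2) atTop atTop :=
      Real.tendsto_exp_atTop.atTop_div_const two_pos
    have hcosh_top : Tendsto Real.cosh atTop atTop := by
      refine tendsto_atTop_mono (fun x => ?_) hexp
      rw [Real.cosh_eq]
      have := Real.exp_pos (-x)
      linarith
    have hcoshtop : Tendsto (fun x : ℝ => Real.cosh (x / 2)) atTop atTop :=
      hcosh_top.comp hdivtop
    have hA : Tendsto (fun x : ℝ => 1 / (2 * Real.cosh (x / 2))) atTop (nhds 0) := by
      simp only [one_div]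
      exact (hcoshtop.const_mul_atTop two_pos).inv_tendsto_atTop
    have h1 : Tendsto (fun x : ℝ => Real.arcsin (1 / (2 * Real.cosh (x / 2))))
        atTop (nhds 0) := by
      have := (Real.continuous_arcsin.tendsto 0).comp hA
      simpa [Real.arcsin_zero, Function.comp_def] using this
    have h2 : Tendsto (fun x : ℝ => ∑ i ∈ Finset.Icc 1 (k - 1),
        Real.arcsin (Real.cosh (b i / 2) / Real.cosh (x / 2))) atTop (nhds 0) := by
      have hsum : Tendsto (fun x : ℝ => ∑ i ∈ Finset.Icc 1 (k - 1),
          Real.arcsin (Real.cosh (b i / 2) / Real.cosh (x / 2))) atTop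
          (nhds (∑ i ∈ Finset.Icc 1 (k - 1), (0:ℝ))) := by
        refine tendsto_finset_sum _ fun i _ => ?_
        have hterm : Tendsto (fun x : ℝ => Real.cosh (b i / 2) / Real.cosh (x / 2))
            atTop (nhds 0) := Tendsto.div_atTop tendsto_const_nhds hcoshtop
        have := (Real.continuous_arcsin.tendsto 0).comp hterm
        simpa [Real.arcsin_zero, Function.comp_def] using this
      simpa using hsum
    have := (h1.const_mul (6 * (c : ℝ))).add (h2.const_mul 2)
    rw [hfe]
    simpa using this
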